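/- Let A be a divisor of F and E = E_1 + ⋯ + E_N a sum of N distinct rational places, all different from P∞, with supp A ∩ supp E = ∅. Then for any (w_1,…,w_N) ∈ 𝔽_q^N there exists a ∈ Я(A) with δ_A(a) ≤ deg E + 2g − 1 − deg A such that a(E_j) = w_j for j = 1,…,N. -/

import Mathlib

noncomputable section

open Polynomial
attribute [local instance] Classical.propDecidable

/-- Abstract axiomatization of the data of an algebraic function field of one
variable of genus `genus` whose full field of constants is the finite field `Fq`:
a field `F` of functions, a set of places with their discrete valuations `v`
(normalized so that each valuation is surjective onto `ℤ`; by convention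
`v P 0 = 0`), degrees of places, evaluation of functions at rational places,
Riemann–Roch spaces `RRmod A` of divisors `A : Place →₀ ℤ` together with the
statement of the Riemann–Roch theorem tying their dimensions to the genus. -/
structure FnF (Fq : Type) [Field Fq] where
  F : Type
  [fieldF : Field F]
  [algF : Algebra Fq F]
  Place : Type
  v : Place → F → ℤ
  v_zero : ∀ P, v P 0 = 0
  v_mul : ∀ (P : Place) (f g : F), f ≠ 0 → g ≠ 0 → v P (f * g) = v P f + v P g
  v_add : ∀ (P : Place) (f g : F), f + g ≠ 0 → f ≠ 0 → g ≠ 0 →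
    min (v P f) (v P g) ≤ v P (f + g)
  v_neg : ∀ (P : Place) (f : F), v P (-f) = v P f
  v_const : ∀ (P : Place) (c : Fq), v P (algebraMap Fq F c) = 0
  v_surj : ∀ P : Place, ∃ f : F, f ≠ 0 ∧ v P f = 1
  v_finite : ∀ f : F, f ≠ 0 → {P : Place | v P f ≠ 0}.Finite
  fullConstantField : ∀ f : F, f ≠ 0 → (∀ P, 0 ≤ v P f) →
    ∃ c : Fq, f = algebraMap Fq F c
  degPlace : Place → ℕ
  degPlace_pos : ∀ P, 0 < degPlace P
  eval : Place → F → Fq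
  eval_add : ∀ (P : Place) (f g : F), degPlace P = 1 → 0 ≤ v P f → 0 ≤ v P g →
    eval P (f + g) = eval P f + eval P g
  eval_mul : ∀ (P : Place) (f g : F), degPlace P = 1 → 0 ≤ v P f → 0 ≤ v P g →
    eval P (f * g) = eval P f * eval P g
  eval_const : ∀ (P : Place) (c : Fq), degPlace P = 1 →
    eval P (algebraMap Fq F c) = c
  eval_eq_zero_iff : ∀ (P : Place) (f : F), degPlace P = 1 → 0 ≤ v P f →
    (eval P f = 0 ↔ (f = 0 ∨ 1 ≤ v P f))
  genus : ℕ
  RRmod : (Place →₀ ℤ) → Submodule Fq F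
  mem_RRmod : ∀ (A : Place →₀ ℤ) (f : F),
    f ∈ RRmod A ↔ (f = 0 ∨ ∀ P, 0 ≤ v P f + A P)
  riemannRoch_le : ∀ A : Place →₀ ℤ,
    (A.sum fun P n => n * (degPlace P : ℤ)) + 1 - genus ≤
      (Module.finrank Fq (RRmod A) : ℤ)
  riemannRoch_eq : ∀ A : Place →₀ ℤ,
    2 * (genus : ℤ) - 1 ≤ (A.sum fun P n => n * (degPlace P : ℤ)) →
    (Module.finrank Fq (RRmod A) : ℤ) =
      (A.sum fun P n => n * (degPlace P : ℤ)) + 1 - genus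
  RRmod_eq_bot : ∀ A : Place →₀ ℤ,
    (A.sum fun P n => n * (degPlace P : ℤ)) < 0 → RRmod A = ⊥

attribute [instance] FnF.fieldF FnF.algF

namespace FnF

variable {Fq : Type} [Field Fq] (D : FnF Fq)

/-- Divisors of the function field. -/
abbrev Divisor := D.Place →₀ ℤ

/-- The degree of a divisor. -/
def degDiv (A : D.Divisor) : ℤ := A.sum fun P n => n * (D.degPlace P : ℤ)

/-- `Я(A) = ⋃ₘ L(m·P∞ + A)`, the functions whose pole divisor is bounded by
`A` away from `P∞`. -/
def Ya (Pinf : D.Place) (A : D.Divisor) : Set D.F :=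
  {a | ∃ m : ℤ, a ∈ D.RRmod (Finsupp.single Pinf m + A)}

/-- `δ_A(a) = -v_{P∞}(a) - A(P∞)`, the least `m` with `a ∈ L(m·P∞ + A)`
(meaningful for nonzero `a ∈ Я(A)`). -/
def deltaZ (Pinf : D.Place) (A : D.Divisor) (a : D.F) : ℤ :=
  -(D.v Pinf a) - A Pinf

/-- `δ_A(a)` with the convention `δ_A(0) = -∞`. -/
def delta (Pinf : D.Place) (A : D.Divisor) (a : D.F) : WithBot ℤ :=
  if a = 0 then ⊥ else (D.deltaZ Pinf A a : WithBot ℤ)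

/-- The Weierstrass semigroup of a place `P∞`: pole orders at `P∞` of functions
regular away from `P∞`. -/
def WSemigroup (Pinf : D.Place) : Set ℤ :=
  {m | ∃ f : D.F, f ≠ 0 ∧ D.v Pinf f = -m ∧ ∀ P, P ≠ Pinf → 0 ≤ D.v P f}

end FnF


private lemma degDiv_add' {Fq : Type} [Field Fq] (D : FnF Fq) (X Y : D.Divisor) :
    D.degDiv (X + Y) = D.degDiv X + D.degDiv Y := by
  unfold FnF.degDiv
  exact Finsupp.sum_add_index' (fun a => by simp) (fun a b1 b2 => add_mul _ _ _)

private lemma degDiv_single' {Fq : Type} [Field Fq] (D : FnF Fq) (P : D.Place) (n : ℤ) :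
    D.degDiv (Finsupp.single P n) = n * (D.degPlace P : ℤ) := by
  unfold FnF.degDiv
  exact Finsupp.sum_single_index (by simp)

private lemma degDiv_sum' {Fq : Type} [Field Fq] (D : FnF Fq) {ι : Type} (s : Finset ι)
    (f : ι → D.Divisor) :
    D.degDiv (∑ i ∈ s, f i) = ∑ i ∈ s, D.degDiv (f i) := by
  classical
  induction s using Finset.induction with
  | empty => simp [FnF.degDiv]
  | insert _ _ h ih => rw [Finset.sum_insert h, Finset.sum_insert h, degDiv_add', ih]

private lemma degDiv_sub' {Fq : Type} [Field Fq] (D : FnF Fq) (X Y : D.Divisor) :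
    D.degDiv (X - Y) = D.degDiv X - D.degDiv Y := by
  have h := degDiv_add' D (X - Y) Y
  rw [sub_add_cancel] at h
  omega

open FnF in
/-- Let `A` be a divisor of `F` and `E = E_1 + ⋯ + E_N` a sum of `N`
distinct rational places, all different from `P∞`, with `supp A ∩ supp E = ∅`. Then for
any `(w_1,…,w_N) ∈ 𝔽_q^N` there exists `a ∈ Я(A)` with
`δ_A(a) ≤ deg E + 2g − 1 − deg A` such that `a(E_j) = w_j` for `j = 1,…,N`. -/
theorem exists_interpolating_function
    {Fq : Type} [Field Fq] [Fintype Fq] (D : FnF Fq)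
    (Pinf : D.Place) (hPinf : D.degPlace Pinf = 1)
    (N : ℕ) (Es : Fin N → D.Place) (hinj : Function.Injective Es)
    (hrat : ∀ j, D.degPlace (Es j) = 1) (hne : ∀ j, Es j ≠ Pinf)
    (A : D.Divisor) (hdisj : ∀ j, A (Es j) = 0)
    (w : Fin N → Fq) :
    ∃ a ∈ D.Ya Pinf A,
      D.delta Pinf A a ≤ (((N : ℤ) + 2 * (D.genus : ℤ) - 1 - D.degDiv A : ℤ) : WithBot ℤ) ∧
      ∀ j, D.eval (Es j) a = w j := by
  classical
  by_cases hN0 : N = 0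
  · subst hN0
    refine ⟨0, ⟨0, Submodule.zero_mem _⟩, ?_, fun j => j.elim0⟩
    simp [FnF.delta]
  set m : ℤ := (N : ℤ) + 2 * (D.genus : ℤ) - 1 - D.degDiv A with hm
  set E : D.Divisor := ∑ j : Fin N, Finsupp.single (Es j) (1 : ℤ) with hE
  set B : D.Divisor := Finsupp.single Pinf m + A with hB
  have hBj : ∀ j, B (Es j) = 0 := by
    intro j
    rw [hB, Finsupp.add_apply, Finsupp.single_eq_of_ne' (Ne.symm (hne j)), hdisj j]
    rfl
  have hEj : ∀ j, E (Es j) = 1 := by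
    intro j
    rw [hE, Finsupp.finset_sum_apply]
    rw [Finset.sum_eq_single j
      (fun b _ hb => Finsupp.single_eq_of_ne' (fun h => hb (hinj h)))
      (fun h => absurd (Finset.mem_univ j) h)]
    exact Finsupp.single_eq_same
  have degE : D.degDiv E = N := by
    rw [hE, degDiv_sum']
    simp [degDiv_single', hrat]
  have degB : D.degDiv B = (N : ℤ) + 2 * (D.genus : ℤ) - 1 := by
    rw [hB, degDiv_add', degDiv_single', hPinf, hm]
    ring
  have degBE : D.degDiv (B - E) = 2 * (D.genus : ℤ) - 1 := by
    rw [degDiv_sub', degB, degE]; ring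
  have hsum : ∀ X : D.Divisor, (X.sum fun P n => n * (D.degPlace P : ℤ)) = D.degDiv X :=
    fun X => rfl
  have hfB : (Module.finrank Fq (D.RRmod B) : ℤ) = (N : ℤ) + D.genus := by
    rw [D.riemannRoch_eq B (by rw [hsum, degB]; omega), hsum, degB]
    ring
  have hfBE : (Module.finrank Fq (D.RRmod (B - E)) : ℤ) = (D.genus : ℤ) := by
    rw [D.riemannRoch_eq (B - E) (by rw [hsum, degBE]), hsum, degBE]
    ring
  have hfB' : Module.finrank Fq (D.RRmod B) = N + D.genus := by exact_mod_cast hfB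
  have hfBE' : Module.finrank Fq (D.RRmod (B - E)) = D.genus := by exact_mod_cast hfBE
  haveI hFDB : FiniteDimensional Fq (D.RRmod B) :=
    FiniteDimensional.of_finrank_pos (by omega)
  haveI hFDE : FiniteDimensional Fq (D.RRmod (B - E)) := by
    rcases Nat.eq_zero_or_pos D.genus with hg | hg
    · rw [D.RRmod_eq_bot (B - E) (by rw [hsum, degBE]; omega)]
      infer_instance
    · exact FiniteDimensional.of_finrank_pos (by omega)
  have hv : ∀ (f : D.F), f ∈ D.RRmod B → ∀ j, 0 ≤ D.v (Es j) f := by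
    intro f hf j
    rcases (D.mem_RRmod B f).1 hf with rfl | h
    · rw [D.v_zero]
    · have h1 := h (Es j)
      rw [hBj j] at h1
      omega
  let φ : D.RRmod B →ₗ[Fq] (Fin N → Fq) :=
    { toFun := fun f j => D.eval (Es j) f.1
      map_add' := fun f g => funext fun j =>
        D.eval_add (Es j) f.1 g.1 (hrat j) (hv _ f.2 j) (hv _ g.2 j)
      map_smul' := fun c f => funext fun j => by
        have h1 : ((c • f : D.RRmod B) : D.F) = algebraMap Fq D.F c * f.1 := by
          simp [Algebra.smul_def]
        simp only [h1]
        rw [D.eval_mul (Es j) _ _ (hrat j) (le_of_eq (D.v_const (Es j) c).symm) (hv _ f.2 j),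
          D.eval_const (Es j) c (hrat j)]
        simp }
  have hker : ∀ f : D.RRmod B, f ∈ LinearMap.ker φ → (f : D.F) ∈ D.RRmod (B - E) := by
    intro f hf
    rw [D.mem_RRmod]
    by_cases h0 : (f : D.F) = 0
    · exact Or.inl h0
    right
    intro P
    rw [Finsupp.sub_apply]
    by_cases hP : ∃ j, P = Es j
    · obtain ⟨j, rfl⟩ := hP
      have he : D.eval (Es j) f.1 = 0 := congrFun (LinearMap.mem_ker.1 hf) j
      have h2 := ((D.eval_eq_zero_iff (Es j) f.1 (hrat j) (hv _ f.2 j)).1 he).resolve_left h0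
      rw [hBj j, hEj j]
      omega
    · push_neg at hP
      have hE0 : E P = 0 := by
        rw [hE, Finsupp.finset_sum_apply]
        exact Finset.sum_eq_zero fun k _ => Finsupp.single_eq_of_ne' fun h => hP k h.symm
      have h3 := ((D.mem_RRmod B f.1).1 f.2).resolve_left h0 P
      rw [hE0]
      omega
  let ψ : LinearMap.ker φ →ₗ[Fq] D.RRmod (B - E) :=
    { toFun := fun f => ⟨f.1.1, hker f.1 f.2⟩
      map_add' := fun f g => rfl
      map_smul' := fun c f => rfl }
  have hψ : Function.Injective ψ := by
    intro x y h
    have h1 := Subtype.ext_iff.mp h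
    exact Subtype.ext (Subtype.ext h1)
  have hk : Module.finrank Fq (LinearMap.ker φ) ≤ D.genus := by
    have := LinearMap.finrank_le_finrank_of_injective hψ
    omega
  have hrn := LinearMap.finrank_range_add_finrank_ker φ
  have hle : Module.finrank Fq (LinearMap.range φ) ≤ N := by
    have h1 := Submodule.finrank_le (LinearMap.range φ)
    rwa [Module.finrank_fin_fun] at h1
  have hrange : Module.finrank Fq (LinearMap.range φ) = N := by omega
  have hsurj : Function.Surjective φ := by
    rw [← LinearMap.range_eq_top]
    apply Submodule.eq_top_of_finrank_eq
    rw [hrange, Module.finrank_fin_fun]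
  obtain ⟨f, hfw⟩ := hsurj w
  refine ⟨f.1, ⟨m, f.2⟩, ?_, fun j => congrFun hfw j⟩
  by_cases h0 : (f : D.F) = 0
  · simp [FnF.delta, h0]
  · have hmem := ((D.mem_RRmod B f.1).1 f.2).resolve_left h0 Pinf
    have hBP : B Pinf = m + A Pinf := by
      rw [hB, Finsupp.add_apply, Finsupp.single_eq_same]
    rw [hBP] at hmem
    rw [FnF.delta, if_neg h0]
    exact WithBot.coe_le_coe.mpr (by rw [FnF.deltaZ]; omega)
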